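/- Let V be a complete non-archimedean normed F-vector space and B a countably dimensional F-algebra with F-basis {t_n}. Then every element f of the completion of B⊗V (with respect to the infimum norm) is represented by a unique sequence (v_n) in V converging to zero such that f = Σ_n t_n⊗v_n, and ‖f‖ = max_n |v_n|. -/

import Mathlib

open TensorProduct Filter

section helpers
variable {F : Type*} [Field F] {V : Type*} [NormedAddCommGroup V] [Module F V]
  {B : Type*} [CommRing B] [Algebra F B]

lemma na_sum_le (hna : IsNonarchimedean (fun v : V => ‖v‖)) {ι : Type*} (s : Finset ι)
    (g : ι → V) {r : ℝ} (hr : 0 ≤ r) (h : ∀ i ∈ s, ‖g i‖ ≤ r) : ‖∑ i ∈ s, g i‖ ≤ r := by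
  classical
  induction s using Finset.cons_induction with
  | empty => simpa
  | cons a s ha ih =>
    rw [Finset.sum_cons]
    exact le_trans (hna _ _) (max_le (h a (Finset.mem_cons_self _ _))
      (ih fun i hi => h i (Finset.mem_cons_of_mem hi)))

noncomputable def coordMap (t : Module.Basis ℕ F B) : B ⊗[F] V ≃ₗ[F] (ℕ →₀ V) :=
  (TensorProduct.congr t.repr (LinearEquiv.refl F V)).trans (finsuppScalarLeft F V ℕ)

lemma coordMap_tmul (t : Module.Basis ℕ F B) (b : B) (v : V) (m : ℕ) :
    coordMap t (b ⊗ₜ[F] v) m = t.repr b m • v := by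
  simp [coordMap, finsuppScalarLeft_apply_tmul_apply]

lemma coordMap_symm_single (t : Module.Basis ℕ F B) (n : ℕ) (v : V) :
    (coordMap t).symm (Finsupp.single n v) = t n ⊗ₜ[F] v := by
  simp [coordMap, finsuppScalarLeft_symm_apply_single]

lemma coordMap_basis_tmul (t : Module.Basis ℕ F B) (n : ℕ) (v : V) :
    coordMap t (t n ⊗ₜ[F] v) = Finsupp.single n v := by
  rw [← coordMap_symm_single t n v, LinearEquiv.apply_symm_apply]

lemma sum_repr (t : Module.Basis ℕ F B) (x : B ⊗[F] V) :
    x = ∑ m ∈ (coordMap t x).support, t m ⊗ₜ[F] (coordMap t x m) := by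
  obtain ⟨g, rfl⟩ : ∃ g, x = (coordMap t).symm g :=
    ⟨coordMap t x, ((coordMap t).symm_apply_apply x).symm⟩
  simp only [LinearEquiv.apply_symm_apply]
  conv_lhs => rw [← Finsupp.sum_single g]
  rw [Finsupp.sum, map_sum]
  exact Finset.sum_congr rfl fun m _ => coordMap_symm_single t m _

lemma coord_bddAbove (t : Module.Basis ℕ F B) (x : B ⊗[F] V) :
    BddAbove (Set.range fun m => ‖coordMap t x m‖) := by
  refine ⟨∑ k ∈ (coordMap t x).support, ‖coordMap t x k‖, ?_⟩
  rintro _ ⟨m, rfl⟩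
  dsimp only
  by_cases hm : m ∈ (coordMap t x).support
  · exact Finset.single_le_sum (fun k _ => norm_nonneg _) hm
  · rw [Finsupp.notMem_support_iff.mp hm, norm_zero]
    exact Finset.sum_nonneg fun k _ => norm_nonneg _

/-- The canonical `Fin`-indexed representation of `x`. -/
lemma fin_repr (t : Module.Basis ℕ F B) (x : B ⊗[F] V) :
    ∃ (n : ℕ) (b : Fin n → B) (w : Fin n → V),
      x = ∑ i, b i ⊗ₜ[F] w i ∧ (⨆ i, ‖w i‖) = ⨆ m, ‖coordMap t x m‖ := by
  classical
  obtain ⟨s, hs⟩ : ∃ s : Finset ℕ, s = (coordMap t x).support := ⟨_, rfl⟩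
  have hrepr : x = ∑ m ∈ s, t m ⊗ₜ[F] coordMap t x m := by rw [hs]; exact sum_repr t x
  have hzero : ∀ m, m ∉ s → coordMap t x m = 0 := by
    intro m hm; rw [hs] at hm; exact Finsupp.notMem_support_iff.mp hm
  clear hs
  refine ⟨s.card, fun i => t ((s.equivFin.symm i : s) : ℕ),
    fun i => coordMap t x ((s.equivFin.symm i : s) : ℕ), ?_, ?_⟩
  · conv_lhs => rw [hrepr]
    rw [← Finset.sum_coe_sort s (fun m => t m ⊗ₜ[F] coordMap t x m)]
    exact (Equiv.sum_comp s.equivFin.symm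
      (fun i : s => t (i : ℕ) ⊗ₜ[F] coordMap t x (i : ℕ))).symm
  · apply le_antisymm
    · exact Real.iSup_le (fun i => le_ciSup (coord_bddAbove t x) _)
        (Real.iSup_nonneg fun m => norm_nonneg _)
    · refine Real.iSup_le (fun m => ?_) (Real.iSup_nonneg fun i => norm_nonneg _)
      by_cases hm : m ∈ s
      · obtain ⟨i, hi⟩ : ∃ i, s.equivFin.symm i = ⟨m, hm⟩ :=
          ⟨s.equivFin ⟨m, hm⟩, Equiv.symm_apply_apply _ _⟩
        have h2 : ‖coordMap t x m‖ = ‖coordMap t x ((s.equivFin.symm i : s) : ℕ)‖ := by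
          rw [hi]
        rw [h2]
        exact le_ciSup (Set.Finite.bddAbove (Set.finite_range
          fun i : Fin s.card => ‖coordMap t x ((s.equivFin.symm i : s) : ℕ)‖)) i
      · rw [hzero m hm, norm_zero]
        exact Real.iSup_nonneg fun i => norm_nonneg _

lemma coord_le (hna : IsNonarchimedean (fun v : V => ‖v‖))
    (hsmul : ∀ (c : F) (v : V), c ≠ 0 → ‖c • v‖ = ‖v‖) (t : Module.Basis ℕ F B)
    (Nrm : B ⊗[F] V → ℝ)
    (hNrm : ∀ x : B ⊗[F] V,
      Nrm x = sInf { r : ℝ | ∃ (n : ℕ) (b : Fin n → B) (w : Fin n → V),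
        x = ∑ i, b i ⊗ₜ[F] w i ∧ r = ⨆ i, ‖w i‖ })
    (x : B ⊗[F] V) (m : ℕ) : ‖coordMap t x m‖ ≤ Nrm x := by
  rw [hNrm x]
  apply le_csInf
  · obtain ⟨n, b, w, hx, hr⟩ := fin_repr t x
    exact ⟨⨆ i, ‖w i‖, n, b, w, hx, rfl⟩
  · rintro r ⟨n, b, w, hx, rfl⟩
    have hr0 : (0:ℝ) ≤ ⨆ i, ‖w i‖ := Real.iSup_nonneg fun i => norm_nonneg _
    have hx2 : coordMap t x m = ∑ i : Fin n, t.repr (b i) m • w i := by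
      rw [hx, map_sum, Finsupp.finset_sum_apply]
      exact Finset.sum_congr rfl fun i _ => coordMap_tmul t (b i) (w i) m
    rw [hx2]
    refine na_sum_le hna _ _ hr0 fun i _ => ?_
    by_cases hc : t.repr (b i) m = 0
    · rw [hc, zero_smul, norm_zero]; exact hr0
    · rw [hsmul _ _ hc]
      exact le_ciSup (Set.Finite.bddAbove (Set.finite_range fun i : Fin n => ‖w i‖)) i

lemma Nrm_eq (hna : IsNonarchimedean (fun v : V => ‖v‖))
    (hsmul : ∀ (c : F) (v : V), c ≠ 0 → ‖c • v‖ = ‖v‖) (t : Module.Basis ℕ F B)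
    (Nrm : B ⊗[F] V → ℝ)
    (hNrm : ∀ x : B ⊗[F] V,
      Nrm x = sInf { r : ℝ | ∃ (n : ℕ) (b : Fin n → B) (w : Fin n → V),
        x = ∑ i, b i ⊗ₜ[F] w i ∧ r = ⨆ i, ‖w i‖ })
    (x : B ⊗[F] V) : Nrm x = ⨆ m, ‖coordMap t x m‖ := by
  obtain ⟨n, b, w, hx, hr⟩ := fin_repr t x
  apply le_antisymm
  · rw [hNrm x]
    refine csInf_le ⟨0, ?_⟩ ⟨n, b, w, hx, hr.symm⟩
    rintro r ⟨k, b', w', _, rfl⟩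
    exact Real.iSup_nonneg fun i => norm_nonneg _
  · refine Real.iSup_le (fun m => coord_le hna hsmul t Nrm hNrm x m) ?_
    rw [hNrm x]
    apply Real.sInf_nonneg
    rintro r ⟨k, b', w', _, rfl⟩
    exact Real.iSup_nonneg fun i => norm_nonneg _

end helpers

/-- every element of the completion `B ⊗̂ V` of `B ⊗[F] V` (with the infimum norm)
is the sum of a unique series `∑ n, t n ⊗ v n` with `(v n)` a null sequence in the complete
non-archimedean normed space `V`, and its norm is `max_n ‖v n‖`.  The completion is modelled by
a complete normed space `W` together with an isometric linear map `j : B ⊗[F] V → W` with dense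
range. -/
theorem stmt1 (F : Type*) [Field F]
    (V : Type*) [NormedAddCommGroup V] [Module F V] [CompleteSpace V]
    (hna : IsNonarchimedean (fun v : V => ‖v‖))
    (hsmul : ∀ (c : F) (v : V), c ≠ 0 → ‖c • v‖ = ‖v‖)
    (B : Type*) [CommRing B] [Algebra F B]
    (t : Module.Basis ℕ F B)
    (Nrm : B ⊗[F] V → ℝ)
    (hNrm : ∀ x : B ⊗[F] V,
      Nrm x = sInf { r : ℝ | ∃ (n : ℕ) (b : Fin n → B) (w : Fin n → V),
        x = ∑ i, b i ⊗ₜ[F] w i ∧ r = ⨆ i, ‖w i‖ })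
    (W : Type*) [NormedAddCommGroup W] [Module F W] [CompleteSpace W]
    (j : B ⊗[F] V →ₗ[F] W) (hj : ∀ x, ‖j x‖ = Nrm x) (hdense : DenseRange j)
    (f : W) :
    (∃! v : ℕ → V,
        Tendsto (fun n => ‖v n‖) atTop (nhds 0) ∧
        HasSum (fun n => j (t n ⊗ₜ[F] v n)) f) ∧
    (∀ v : ℕ → V,
        Tendsto (fun n => ‖v n‖) atTop (nhds 0) →
        HasSum (fun n => j (t n ⊗ₜ[F] v n)) f →
        ‖f‖ = ⨆ n, ‖v n‖) := by
  classical
  -- basic facts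
  have hNj : ∀ (x : B ⊗[F] V) (m : ℕ), ‖coordMap t x m‖ ≤ ‖j x‖ := fun x m => by
    rw [hj]; exact coord_le hna hsmul t Nrm hNrm x m
  have hjn : ∀ x : B ⊗[F] V, ‖j x‖ = ⨆ m, ‖coordMap t x m‖ := fun x => by
    rw [hj]; exact Nrm_eq hna hsmul t Nrm hNrm x
  have hcoord_sum : ∀ (v : ℕ → V) (s : Finset ℕ) (m : ℕ),
      coordMap t (∑ n ∈ s, t n ⊗ₜ[F] v n) m = if m ∈ s then v m else 0 := by
    intro v s m
    rw [map_sum, Finsupp.finset_sum_apply]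
    have : ∀ n ∈ s, coordMap t (t n ⊗ₜ[F] v n) m = if n = m then v n else 0 := by
      intro n _
      rw [coordMap_basis_tmul, Finsupp.single_apply]
    rw [Finset.sum_congr rfl this, Finset.sum_ite_eq' s m v]
  -- the norm formula
  have hnormF : ∀ v : ℕ → V,
      Tendsto (fun n => ‖v n‖) atTop (nhds 0) →
      HasSum (fun n => j (t n ⊗ₜ[F] v n)) f → ‖f‖ = ⨆ n, ‖v n‖ := by
    intro v hv hsum
    have hbdd : BddAbove (Set.range fun n => ‖v n‖) := hv.bddAbove_range
    have hsupnn : (0:ℝ) ≤ ⨆ n, ‖v n‖ := Real.iSup_nonneg fun n => norm_nonneg _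
    have hps := hsum.tendsto_sum_nat
    have hSeq : ∀ N : ℕ, ∑ n ∈ Finset.range N, j (t n ⊗ₜ[F] v n)
        = j (∑ n ∈ Finset.range N, t n ⊗ₜ[F] v n) := fun N => (map_sum j _ _).symm
    apply le_antisymm
    · refine le_of_tendsto hps.norm (Eventually.of_forall fun N => ?_)
      rw [hSeq, hjn]
      refine Real.iSup_le (fun m => ?_) hsupnn
      rw [hcoord_sum]
      split
      · exact le_ciSup hbdd m
      · rw [norm_zero]; exact hsupnn
    · refine Real.iSup_le (fun m => ?_) (norm_nonneg f)
      refine ge_of_tendsto hps.norm (eventually_atTop.mpr ⟨m + 1, fun N hN => ?_⟩)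
      have := hNj (∑ n ∈ Finset.range N, t n ⊗ₜ[F] v n) m
      rw [hcoord_sum, if_pos (Finset.mem_range.mpr hN)] at this
      rwa [hSeq]
  -- uniqueness
  have huniq : ∀ v v' : ℕ → V, HasSum (fun n => j (t n ⊗ₜ[F] v n)) f →
      HasSum (fun n => j (t n ⊗ₜ[F] v' n)) f → v = v' := by
    intro v v' h h'
    funext m
    have hdiff0 : Tendsto (fun N => ‖(∑ n ∈ Finset.range N, j (t n ⊗ₜ[F] v n))
        - ∑ n ∈ Finset.range N, j (t n ⊗ₜ[F] v' n)‖) atTop (nhds 0) := by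
      have h2 := (h.tendsto_sum_nat.sub h'.tendsto_sum_nat).norm
      rwa [sub_self, norm_zero] at h2
    have hb : ∀ N, m < N → ‖v m - v' m‖ ≤ ‖(∑ n ∈ Finset.range N, j (t n ⊗ₜ[F] v n))
        - ∑ n ∈ Finset.range N, j (t n ⊗ₜ[F] v' n)‖ := by
      intro N hN
      have hsub : (∑ n ∈ Finset.range N, j (t n ⊗ₜ[F] v n))
          - ∑ n ∈ Finset.range N, j (t n ⊗ₜ[F] v' n)
          = j (∑ n ∈ Finset.range N, t n ⊗ₜ[F] (v n - v' n)) := by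
        rw [map_sum, ← Finset.sum_sub_distrib]
        refine Finset.sum_congr rfl fun n _ => ?_
        rw [TensorProduct.tmul_sub, map_sub]
      rw [hsub]
      have h3 := hNj (∑ n ∈ Finset.range N, t n ⊗ₜ[F] (v n - v' n)) m
      rwa [hcoord_sum, if_pos (Finset.mem_range.mpr hN)] at h3
    have h4 : ‖v m - v' m‖ ≤ 0 :=
      ge_of_tendsto hdiff0 (eventually_atTop.mpr ⟨m + 1, fun N hN => hb N hN⟩)
    have h5 := le_antisymm h4 (norm_nonneg _)
    rwa [norm_eq_zero, sub_eq_zero] at h5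
  -- existence
  obtain ⟨x, hx⟩ : ∃ x : ℕ → B ⊗[F] V, ∀ k, ‖f - j (x k)‖ < (1/2 : ℝ) ^ k := by
    choose x hx using fun k => (Metric.denseRange_iff.mp hdense) f ((1/2 : ℝ) ^ k)
      (by positivity)
    exact ⟨x, fun k => by rw [← dist_eq_norm]; exact hx k⟩
  have hdiff : ∀ k l m, ‖coordMap t (x l) m - coordMap t (x k) m‖
      ≤ (1/2 : ℝ) ^ l + (1/2 : ℝ) ^ k := by
    intro k l m
    have h1 : coordMap t (x l) m - coordMap t (x k) m = coordMap t (x l - x k) m := by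
      rw [map_sub, Finsupp.sub_apply]
    rw [h1]
    refine le_trans (hNj _ m) ?_
    rw [map_sub]
    calc ‖j (x l) - j (x k)‖ = ‖-(f - j (x l)) + (f - j (x k))‖ := by
            rw [neg_sub, sub_add_sub_cancel]
      _ ≤ ‖-(f - j (x l))‖ + ‖f - j (x k)‖ := norm_add_le _ _
      _ = ‖f - j (x l)‖ + ‖f - j (x k)‖ := by rw [norm_neg]
      _ ≤ (1/2 : ℝ) ^ l + (1/2 : ℝ) ^ k := add_le_add (hx l).le (hx k).le
  have hcauchy : ∀ m : ℕ, ∃ L : V, Tendsto (fun k => coordMap t (x k) m) atTop (nhds L) := by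
    intro m
    apply cauchySeq_tendsto_of_complete
    refine cauchySeq_of_le_tendsto_0 (fun N => 2 * (1/2 : ℝ) ^ N) (fun k l N hk hl => ?_) ?_
    · rw [dist_eq_norm]
      refine le_trans (hdiff l k m) ?_
      have e1 : (1/2 : ℝ) ^ k ≤ (1/2 : ℝ) ^ N :=
        pow_le_pow_of_le_one (by norm_num) (by norm_num) hk
      have e2 : (1/2 : ℝ) ^ l ≤ (1/2 : ℝ) ^ N :=
        pow_le_pow_of_le_one (by norm_num) (by norm_num) hl
      linarith
    · have := tendsto_pow_atTop_nhds_zero_of_lt_one (by norm_num : (0:ℝ) ≤ 1/2)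
        (by norm_num : (1/2 : ℝ) < 1)
      simpa using this.const_mul (2 : ℝ)
  choose v hv using hcauchy
  have hu : ∀ k m, ‖v m - coordMap t (x k) m‖ ≤ 2 * (1/2 : ℝ) ^ k := by
    intro k m
    have hlim : Tendsto (fun l => ‖coordMap t (x l) m - coordMap t (x k) m‖) atTop
        (nhds ‖v m - coordMap t (x k) m‖) := ((hv m).sub_const _).norm
    refine le_of_tendsto hlim (eventually_atTop.mpr ⟨k, fun l hl => ?_⟩)
    refine le_trans (hdiff k l m) ?_
    have e1 : (1/2 : ℝ) ^ l ≤ (1/2 : ℝ) ^ k :=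
      pow_le_pow_of_le_one (by norm_num) (by norm_num) hl
    linarith
  -- null sequence
  have hnull : Tendsto (fun n => ‖v n‖) atTop (nhds 0) := by
    rw [Metric.tendsto_atTop]
    intro ε hε
    obtain ⟨k, hk⟩ : ∃ k : ℕ, (1/2 : ℝ) ^ k < ε / 2 :=
      exists_pow_lt_of_lt_one (by linarith) (by norm_num)
    refine ⟨((coordMap t (x k)).support.sup id) + 1, fun n hn => ?_⟩
    have hns : n ∉ (coordMap t (x k)).support := by
      intro hmem
      have := Finset.le_sup (f := id) hmem
      simp only [id] at this
      omega
    have h0 : coordMap t (x k) n = 0 := Finsupp.notMem_support_iff.mp hns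
    have h1 : ‖v n‖ ≤ 2 * (1/2 : ℝ) ^ k := by
      have := hu k n
      rwa [h0, sub_zero] at this
    rw [Real.dist_eq, sub_zero, abs_of_nonneg (norm_nonneg _)]
    linarith
  -- HasSum
  have hhs : HasSum (fun n => j (t n ⊗ₜ[F] v n)) f := by
    rw [HasSum]
    show Tendsto (fun s : Finset ℕ => ∑ b ∈ s, j (t b ⊗ₜ[F] v b)) atTop (nhds f)
    rw [Metric.tendsto_atTop]
    intro ε hε
    obtain ⟨k, hk⟩ : ∃ k : ℕ, (1/2 : ℝ) ^ k < ε / 3 :=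
      exists_pow_lt_of_lt_one (by linarith) (by norm_num)
    refine ⟨(coordMap t (x k)).support, fun s hs => ?_⟩
    have hsub : (∑ n ∈ s, j (t n ⊗ₜ[F] v n)) - j (x k)
        = j ((∑ n ∈ s, t n ⊗ₜ[F] v n) - x k) := by
      rw [map_sub, map_sum]
    have hkey : ‖(∑ n ∈ s, j (t n ⊗ₜ[F] v n)) - j (x k)‖ ≤ 2 * (1/2 : ℝ) ^ k := by
      rw [hsub, hjn]
      refine Real.iSup_le (fun m => ?_) (by positivity)
      rw [map_sub, Finsupp.sub_apply, hcoord_sum]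
      by_cases hm : m ∈ s
      · rw [if_pos hm]; exact hu k m
      · rw [if_neg hm]
        have h0 : coordMap t (x k) m = 0 := by
          apply Finsupp.notMem_support_iff.mp
          intro hmem
          exact hm (hs hmem)
        rw [h0, sub_zero, norm_zero]
        positivity
    rw [dist_eq_norm]
    calc ‖(∑ n ∈ s, j (t n ⊗ₜ[F] v n)) - f‖
        = ‖((∑ n ∈ s, j (t n ⊗ₜ[F] v n)) - j (x k)) + (j (x k) - f)‖ := by
            rw [sub_add_sub_cancel]
      _ ≤ ‖(∑ n ∈ s, j (t n ⊗ₜ[F] v n)) - j (x k)‖ + ‖j (x k) - f‖ := norm_add_le _ _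
      _ ≤ 2 * (1/2 : ℝ) ^ k + ‖f - j (x k)‖ := by
          rw [norm_sub_rev (j (x k)) f]; exact add_le_add hkey le_rfl
      _ < 2 * (ε/3) + ε/3 := by have := hx k; gcongr <;> linarith
      _ ≤ ε := by linarith
  exact ⟨⟨v, ⟨hnull, hhs⟩, fun v' hv' => huniq v' v hv'.2 hhs⟩, hnormF⟩
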